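/- arXiv:1812.03649 — 2 statements merged into one kernel-verified Lean document; each statement's English description precedes it below -/
import Mathlib

section
/- Let n ≥ 1 and let ρ:(0,∞)→(0,∞) satisfy: there exist constants C > 0 and 0 < k₁ < k₂ with sup_{r/2 ≤ t ≤ r} ρ(t) ≤ C ∫_{k₁r}^{k₂r} ρ(t)/t dt for all r > 0. Define ρ̃(r) = ∫_{k₁r}^{k₂r} ρ(s)/s ds. Let τ:(0,∞)→(0,∞) be doubling in the sense that there is C'' ≥ 1 with (1/C'')τ(s) ≤ τ(r) ≤ C''τ(s) whenever 0 < s ≤ r ≤ 2s. Then there are constants C₁, C₂ > 0 such that for every r > 0: (a) Σ_{j=−∞}^{−1} ρ̃(2ʲ r) ≤ C₁ ∫₀^{k₂ r} ρ(s)/s ds, and (b) Σ_{j=0}^{∞} ρ̃(2ʲ r) τ((2ʲ r)^{−n}) ≤ C₂ ∫_{k₁ r}^{∞} (ρ(s)/s) τ(s^{−n}) ds. -/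
open MeasureTheory Metric Set Filter
open scoped ENNReal NNReal Topology

noncomputable section

/-- A Young function `Φ : [0,∞] → [0,∞]`: convex, left-continuous, vanishing (with limit `0`)
at `0`, and equal (with limit) to `∞` at `∞`. -/
structure IsYoung (Φ : ℝ≥0∞ → ℝ≥0∞) : Prop where
  map_zero : Φ 0 = 0
  convex : ∀ p q x y : ℝ≥0∞, p + q = 1 → Φ (p * x + q * y) ≤ p * Φ x + q * Φ y
  left_continuous : ∀ r : ℝ≥0∞, Φ r = ⨆ s ∈ Set.Iio r, Φ s
  tendsto_zero : Filter.Tendsto Φ (nhdsWithin 0 (Set.Ioi 0)) (nhds 0)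
  map_top : Φ ⊤ = ⊤
  tendsto_top : Filter.Tendsto (fun r : ℝ≥0 => Φ (r : ℝ≥0∞)) Filter.atTop (nhds ⊤)

/-- The generalized (O'Neil) inverse `Φ⁻¹(s) = inf {r ≥ 0 : Φ(r) > s}` (with `inf ∅ = ∞`). -/
def yInv (Φ : ℝ≥0∞ → ℝ≥0∞) (s : ℝ≥0∞) : ℝ≥0∞ := sInf {r : ℝ≥0∞ | s < Φ r}

/-- `r^{-n}` as an extended nonnegative real. -/
def rinv (n : ℕ) (r : ℝ) : ℝ≥0∞ := ENNReal.ofReal ((r ^ n)⁻¹)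

variable {α : Type*}

/-- Luxemburg (quasi-)norm of an `ℝ≥0∞`-valued function. -/
def luxNorm (Φ : ℝ≥0∞ → ℝ≥0∞) [MeasurableSpace α] (μ : Measure α) (g : α → ℝ≥0∞) : ℝ≥0∞ :=
  sInf {lam : ℝ≥0∞ | 0 < lam ∧ lam ≠ ⊤ ∧ (∫⁻ x, Φ (g x / lam) ∂μ) ≤ 1}

/-- Weak Luxemburg quasi-norm: `sup_{λ>0} ‖λ χ_{{g>λ}}‖_{L^Φ}`. -/
def wluxNorm (Φ : ℝ≥0∞ → ℝ≥0∞) [MeasurableSpace α] (μ : Measure α) (g : α → ℝ≥0∞) : ℝ≥0∞ :=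
  ⨆ (lam : ℝ≥0∞) (_ : 0 < lam) (_ : lam ≠ ⊤),
    luxNorm Φ μ (({x | lam < g x}).indicator (fun _ => lam))

/-- `|f|` regarded as an `ℝ≥0∞`-valued function. -/
def enn (f : α → ℝ) : α → ℝ≥0∞ := fun x => (‖f x‖₊ : ℝ≥0∞)

/-- Euclidean space `ℝⁿ`. -/
abbrev Euc (n : ℕ) := EuclideanSpace ℝ (Fin n)

/-- The generalized fractional integral operator `I_ρ`. -/
def Irho (n : ℕ) (ρ : ℝ → ℝ) (f : Euc n → ℝ) (x : Euc n) : ℝ :=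
  ∫ y, (ρ (dist x y) / (dist x y) ^ n) * f y

/-- The Hardy–Littlewood maximal operator. -/
def maxOp (n : ℕ) (f : Euc n → ℝ) (x : Euc n) : ℝ≥0∞ :=
  ⨆ (r : ℝ) (_ : 0 < r), (volume (ball x r))⁻¹ * ∫⁻ y in ball x r, (‖f y‖₊ : ℝ≥0∞)

/-- The generalized fractional maximal operator `M_ρ`. -/
def Mrho (n : ℕ) (ρ : ℝ → ℝ) (f : Euc n → ℝ) (x : Euc n) : ℝ≥0∞ :=
  ⨆ (r : ℝ) (_ : 0 < r),
    ENNReal.ofReal (ρ r) * ((volume (ball x r))⁻¹ * ∫⁻ y in ball x r, (‖f y‖₊ : ℝ≥0∞))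

/-- The `∇₂` condition: `Φ(r) ≤ (1/(2C)) Φ(C r)` for some `C > 1`. -/
def Nabla2 (Φ : ℝ≥0∞ → ℝ≥0∞) : Prop :=
  ∃ C : ℝ, 1 < C ∧ ∀ r : ℝ≥0∞, Φ r ≤ ENNReal.ofReal (1 / (2 * C)) * Φ (ENNReal.ofReal C * r)

/-- `∫₀¹ ρ(t)/t dt < ∞`. -/
def RhoInt (ρ : ℝ → ℝ) : Prop :=
  (∫⁻ t in Set.Ioo (0:ℝ) 1, ENNReal.ofReal (ρ t / t)) < ⊤

/-- `sup_{r/2 ≤ t ≤ r} ρ(t) ≤ C ∫_{k₁ r}^{k₂ r} ρ(t)/t dt` for all `r > 0`. -/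
def RhoSupWith (ρ : ℝ → ℝ) (C k₁ k₂ : ℝ) : Prop :=
  0 < C ∧ 0 < k₁ ∧ k₁ < k₂ ∧ ∀ r > (0:ℝ), ∀ t ∈ Set.Icc (r / 2) r,
    ENNReal.ofReal (ρ t) ≤
      ENNReal.ofReal C * ∫⁻ s in Set.Ioo (k₁ * r) (k₂ * r), ENNReal.ofReal (ρ s / s)

def RhoSup (ρ : ℝ → ℝ) : Prop := ∃ C k₁ k₂ : ℝ, RhoSupWith ρ C k₁ k₂

/-- The condition
`Φ⁻¹(r^{-n}) ∫₀^r ρ(t)/t dt + ∫_r^∞ ρ(t) Φ⁻¹(t^{-n}) dt/t ≤ C Ψ⁻¹(r^{-n})`. -/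
def CondOrl (n : ℕ) (Φ Ψ : ℝ≥0∞ → ℝ≥0∞) (ρ : ℝ → ℝ) : Prop :=
  ∃ C : ℝ, 0 < C ∧ ∀ r > (0:ℝ),
    yInv Φ (rinv n r) * (∫⁻ t in Set.Ioo (0:ℝ) r, ENNReal.ofReal (ρ t / t))
      + (∫⁻ t in Set.Ioi r, ENNReal.ofReal (ρ t / t) * yInv Φ (rinv n t))
    ≤ ENNReal.ofReal C * yInv Ψ (rinv n r)

/-- Generalized Orlicz–Morrey norm (third kind). -/
def morNorm (n : ℕ) (Φ : ℝ≥0∞ → ℝ≥0∞) (φ : ℝ → ℝ≥0∞) (g : Euc n → ℝ≥0∞) : ℝ≥0∞ :=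
  ⨆ (x : Euc n) (r : ℝ) (_ : 0 < r),
    (φ r)⁻¹ * yInv Φ (rinv n r) * luxNorm Φ volume ((ball x r).indicator g)

/-- Weak generalized Orlicz–Morrey norm (third kind). -/
def wMorNorm (n : ℕ) (Φ : ℝ≥0∞ → ℝ≥0∞) (φ : ℝ → ℝ≥0∞) (g : Euc n → ℝ≥0∞) : ℝ≥0∞ :=
  ⨆ (x : Euc n) (r : ℝ) (_ : 0 < r),
    (φ r)⁻¹ * yInv Φ (rinv n r) * wluxNorm Φ volume ((ball x r).indicator g)

/-- A real positive function regarded as `ℝ≥0∞`-valued. -/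
def ofR (φ : ℝ → ℝ) : ℝ → ℝ≥0∞ := fun t => ENNReal.ofReal (φ t)

/-- Almost increasing (on `(0,∞)`). -/
def AlmostInc (g : ℝ → ℝ≥0∞) : Prop :=
  ∃ C : ℝ, 0 < C ∧ ∀ r s : ℝ, 0 < r → r ≤ s → g r ≤ ENNReal.ofReal C * g s

/-- Almost decreasing (on `(0,∞)`). -/
def AlmostDec (g : ℝ → ℝ≥0∞) : Prop :=
  ∃ C : ℝ, 0 < C ∧ ∀ r s : ℝ, 0 < r → r ≤ s → ENNReal.ofReal C * g s ≤ g r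

/-- The class `G_Φ`: `φ` is positive, `t ↦ φ(t)/Φ⁻¹(t^{-n})` is almost increasing and
`t ↦ φ(t)/(Φ⁻¹(t^{-n}) tⁿ)` is almost decreasing. -/
def GPhi (n : ℕ) (Φ : ℝ≥0∞ → ℝ≥0∞) (φ : ℝ → ℝ) : Prop :=
  (∀ t > (0:ℝ), 0 < φ t) ∧
  AlmostInc (fun t => ENNReal.ofReal (φ t) / yInv Φ (rinv n t)) ∧
  AlmostDec (fun t => ENNReal.ofReal (φ t) / (yInv Φ (rinv n t) * ENNReal.ofReal (t ^ n)))


/-- Bound a `tsum` whose support lies in a window of length `< L` around any support point. -/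
private lemma tsum_window_bound (t : ℕ → ℝ≥0∞) (M : ℝ≥0∞) (L : ℕ)
    (hb : ∀ j, t j ≤ M) (hs : ∀ j j', t j ≠ 0 → t j' ≠ 0 → j' < j + L) :
    ∑' j, t j ≤ (2 * L : ℕ) * M := by
  by_cases h : ∀ j, t j = 0
  · simp [h]
  push_neg at h
  obtain ⟨j₀, hj₀⟩ := h
  have hsub : ∀ j ∉ Finset.Ico (j₀ + 1 - L) (j₀ + L), t j = 0 := by
    intro j hj
    by_contra hne
    have h1 := hs j₀ j hj₀ hne
    have h2 := hs j j₀ hne hj₀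
    simp only [Finset.mem_Ico, not_and, not_lt] at hj
    omega
  rw [tsum_eq_sum hsub]
  calc ∑ j ∈ Finset.Ico (j₀ + 1 - L) (j₀ + L), t j
      ≤ (Finset.Ico (j₀ + 1 - L) (j₀ + L)).card • M :=
        Finset.sum_le_card_nsmul _ _ _ (fun j _ => hb j)
    _ ≤ (2 * L : ℕ) * M := by
        rw [nsmul_eq_mul]
        refine mul_le_mul_left ?_ M
        refine Nat.cast_le.mpr ?_
        rw [Nat.card_Ico]
        omega

/-- Bounded-overlap estimate for a sum of integrals over intervals. -/
private lemma overlap_bound (g : ℝ → ℝ≥0∞) (hg : Measurable g) (I : ℕ → Set ℝ)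
    (hI : ∀ j, MeasurableSet (I j)) (S : Set ℝ) (hS : MeasurableSet S)
    (hsub : ∀ j, I j ⊆ S) (L : ℕ)
    (hL : ∀ j j' s, s ∈ I j → s ∈ I j' → j' < j + L) :
    ∑' j, ∫⁻ s in I j, g s ≤ (2 * L : ℕ) * ∫⁻ s in S, g s := by
  have h1 : ∀ j, ∫⁻ s in I j, g s = ∫⁻ s, (I j).indicator g s := fun j =>
    (lintegral_indicator (hI j) g).symm
  calc ∑' j, ∫⁻ s in I j, g s
      = ∫⁻ s, ∑' j, (I j).indicator g s := by
        simp_rw [h1]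
        exact (lintegral_tsum (fun j => (hg.indicator (hI j)).aemeasurable)).symm
    _ ≤ ∫⁻ s, (2 * L : ℕ) * S.indicator g s := by
        refine lintegral_mono fun s => ?_
        refine tsum_window_bound _ _ _ (fun j => ?_) (fun j j' hj hj' => ?_)
        · by_cases hsj : s ∈ I j
          · rw [Set.indicator_of_mem hsj, Set.indicator_of_mem (hsub j hsj)]
          · simp [Set.indicator_of_notMem hsj]
        · have hj1 : s ∈ I j := by
            by_contra hc; exact hj (Set.indicator_of_notMem hc g)
          have hj2 : s ∈ I j' := by
            by_contra hc; exact hj' (Set.indicator_of_notMem hc g)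
          exact hL j j' s hj1 hj2
    _ = (2 * L : ℕ) * ∫⁻ s in S, g s := by
        rw [lintegral_const_mul _ (hg.indicator hS), lintegral_indicator hS]

/-- Iterated doubling. -/
private lemma doubling_iter (τ : ℝ → ℝ) (C'' : ℝ) (hC : 1 ≤ C'')
    (hpos : ∀ t > (0:ℝ), 0 < τ t)
    (h : ∀ s r : ℝ, 0 < s → s ≤ r → r ≤ 2 * s → τ s ≤ C'' * τ r ∧ τ r ≤ C'' * τ s) :
    ∀ m : ℕ, ∀ s r : ℝ, 0 < s → s ≤ r → r ≤ 2 ^ m * s →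
      τ s ≤ C'' ^ m * τ r ∧ τ r ≤ C'' ^ m * τ s := by
  intro m
  induction m with
  | zero =>
    intro s r hs hsr hrs
    simp only [pow_zero, one_mul] at hrs ⊢
    have : r = s := le_antisymm hrs hsr
    simp [this]
  | succ m ih =>
    intro s r hs hsr hrs
    have hCn : (0:ℝ) ≤ C'' ^ m := pow_nonneg (by linarith) m
    have hτs := hpos s hs
    have hτr := hpos r (lt_of_lt_of_le hs hsr)
    by_cases hcase : r ≤ 2 ^ m * s
    · obtain ⟨h1, h2⟩ := ih s r hs hsr hcase
      have hc : C'' ^ m ≤ C'' ^ (m + 1) := by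
        calc C'' ^ m = 1 * C'' ^ m := (one_mul _).symm
          _ ≤ C'' * C'' ^ m := by nlinarith
          _ = C'' ^ (m + 1) := by ring
      constructor <;> nlinarith
    · push_neg at hcase
      set r' := (2:ℝ) ^ m * s with hr'
      have hr'pos : 0 < r' := by positivity
      have h1 : s ≤ r' := by
        rw [hr']
        have h2m : (1:ℝ) ≤ 2 ^ m := one_le_pow₀ (by norm_num)
        nlinarith
      obtain ⟨ha, hb⟩ := ih s r' hs h1 le_rfl
      have h2 : r ≤ 2 * r' := by
        rw [hr']
        calc r ≤ 2 ^ (m + 1) * s := hrs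
          _ = 2 * (2 ^ m * s) := by ring
      obtain ⟨hc, hd⟩ := h r' r hr'pos hcase.le h2
      have hτ2 := hpos r' hr'pos
      constructor
      · calc τ s ≤ C'' ^ m * τ r' := ha
          _ ≤ C'' ^ m * (C'' * τ r) := by nlinarith
          _ = C'' ^ (m + 1) * τ r := by ring
      · calc τ r ≤ C'' * τ r' := hd
          _ ≤ C'' * (C'' ^ m * τ s) := by nlinarith
          _ = C'' ^ (m + 1) * τ s := by ring

/-- Two-sided comparison from doubling. -/
private lemma doubling_comp (τ : ℝ → ℝ) (C'' : ℝ) (hC : 1 ≤ C'')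
    (hpos : ∀ t > (0:ℝ), 0 < τ t)
    (h : ∀ s r : ℝ, 0 < s → s ≤ r → r ≤ 2 * s → τ s ≤ C'' * τ r ∧ τ r ≤ C'' * τ s)
    (m : ℕ) (a b : ℝ) (ha : 0 < a) (hb : 0 < b)
    (h1 : a ≤ 2 ^ m * b) (h2 : b ≤ 2 ^ m * a) : τ a ≤ C'' ^ m * τ b := by
  rcases le_total a b with hab | hab
  · exact (doubling_iter τ C'' hC hpos h m a b ha hab h2).1
  · exact (doubling_iter τ C'' hC hpos h m b a hb hab h1).2

set_option maxHeartbeats 1000000 in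
/-- the overlapping estimates for `ρ̃(r) = ∫_{k₁ r}^{k₂ r} ρ(s)/s ds`. -/
theorem stmt3 (n : ℕ) (hn : 1 ≤ n) (ρ : ℝ → ℝ) (hρm : Measurable ρ)
    (hρpos : ∀ t > (0:ℝ), 0 < ρ t)
    (C k₁ k₂ : ℝ) (hsup : RhoSupWith ρ C k₁ k₂)
    (τ : ℝ → ℝ) (hτm : Measurable τ) (hτpos : ∀ t > (0:ℝ), 0 < τ t)
    (hτd : ∃ C'' : ℝ, 1 ≤ C'' ∧ ∀ s r : ℝ, 0 < s → s ≤ r → r ≤ 2 * s →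
      τ s ≤ C'' * τ r ∧ τ r ≤ C'' * τ s) :
    ∃ C₁ C₂ : ℝ, 0 < C₁ ∧ 0 < C₂ ∧ ∀ r > (0:ℝ),
      ((∑' j : ℕ, ∫⁻ s in
            Set.Ioo (k₁ * ((2:ℝ) ^ (-(j:ℤ) - 1) * r)) (k₂ * ((2:ℝ) ^ (-(j:ℤ) - 1) * r)),
          ENNReal.ofReal (ρ s / s))
        ≤ ENNReal.ofReal C₁ * ∫⁻ s in Set.Ioo (0:ℝ) (k₂ * r), ENNReal.ofReal (ρ s / s)) ∧
      ((∑' j : ℕ, (∫⁻ s in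
            Set.Ioo (k₁ * ((2:ℝ) ^ (j:ℕ) * r)) (k₂ * ((2:ℝ) ^ (j:ℕ) * r)),
          ENNReal.ofReal (ρ s / s)) * ENNReal.ofReal (τ ((((2:ℝ) ^ (j:ℕ) * r) ^ n)⁻¹)))
        ≤ ENNReal.ofReal C₂ *
            ∫⁻ s in Set.Ioi (k₁ * r), ENNReal.ofReal (ρ s / s * τ ((s ^ n)⁻¹))) := by
  obtain ⟨hC, hk₁, hk₁₂, -⟩ := hsup
  obtain ⟨C'', hC''1, hτd'⟩ := hτd
  have hk₂ : 0 < k₂ := lt_trans hk₁ hk₁₂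
  -- choose L with k₂ ≤ k₁ * 2^L and 1 ≤ L
  obtain ⟨L₀, hL₀⟩ := pow_unbounded_of_one_lt (k₂ / k₁) (one_lt_two (α := ℝ))
  set L := L₀ + 1 with hLdef
  have hLk : k₂ ≤ 2 ^ L * k₁ := by
    have h2 : (2:ℝ) ^ L₀ ≤ 2 ^ L := by
      apply pow_le_pow_right₀ (by norm_num); omega
    have := (div_le_iff₀ hk₁).mp (le_trans hL₀.le h2)
    linarith
  -- choose m with k₂^n ≤ 2^m and (k₁^n)⁻¹ ≤ 2^m
  obtain ⟨m₁, hm₁⟩ := pow_unbounded_of_one_lt (k₂ ^ n) (one_lt_two (α := ℝ))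
  obtain ⟨m₂, hm₂⟩ := pow_unbounded_of_one_lt ((k₁ ^ n)⁻¹) (one_lt_two (α := ℝ))
  set m := max m₁ m₂ with hmdef
  have hmk₂ : k₂ ^ n ≤ 2 ^ m :=
    le_trans hm₁.le (pow_le_pow_right₀ (by norm_num) (le_max_left _ _))
  have hmk₁ : (k₁ ^ n)⁻¹ ≤ 2 ^ m :=
    le_trans hm₂.le (pow_le_pow_right₀ (by norm_num) (le_max_right _ _))
  have hCm : (0:ℝ) < C'' ^ m := pow_pos (by linarith) m
  refine ⟨(2 * L : ℕ), (2 * L : ℕ) * C'' ^ m, by positivity, by positivity, ?_⟩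
  intro r hr
  have hg : Measurable (fun s : ℝ => ENNReal.ofReal (ρ s / s)) :=
    (hρm.div measurable_id).ennreal_ofReal
  constructor
  · -- part (a)
    have key : (∑' j : ℕ, ∫⁻ s in
          Set.Ioo (k₁ * ((2:ℝ) ^ (-(j:ℤ) - 1) * r)) (k₂ * ((2:ℝ) ^ (-(j:ℤ) - 1) * r)),
          ENNReal.ofReal (ρ s / s))
        ≤ (2 * L : ℕ) * ∫⁻ s in Set.Ioo (0:ℝ) (k₂ * r), ENNReal.ofReal (ρ s / s) := by
      refine overlap_bound _ hg _ (fun j => measurableSet_Ioo) _ measurableSet_Ioo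
        (fun j s hs => ?_) L (fun j j' s hs hs' => ?_)
      · obtain ⟨hs1, hs2⟩ := hs
        have hz : (0:ℝ) < (2:ℝ) ^ (-(j:ℤ) - 1) := zpow_pos (by norm_num) _
        constructor
        · have : (0:ℝ) < k₁ * ((2:ℝ) ^ (-(j:ℤ) - 1) * r) := by positivity
          linarith
        · have hz1 : (2:ℝ) ^ (-(j:ℤ) - 1) ≤ 1 :=
            zpow_le_one_of_nonpos₀ (by norm_num) (by omega)
          nlinarith [mul_le_of_le_one_left (mul_pos hk₂ hr).le hz1]
      · -- overlap: lower bound of I j, upper bound of I j'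
        have h1 : k₁ * ((2:ℝ) ^ (-(j:ℤ) - 1) * r) < s := hs.1
        have h2 : s < k₂ * ((2:ℝ) ^ (-(j':ℤ) - 1) * r) := hs'.2
        have key2 : k₁ * (2:ℝ) ^ (-(j:ℤ) - 1) < k₂ * (2:ℝ) ^ (-(j':ℤ) - 1) := by
          have := lt_trans h1 h2
          nlinarith
        have key3 : (2:ℝ) ^ (-(j:ℤ) - 1) < (2:ℝ) ^ ((L:ℤ) + (-(j':ℤ) - 1)) := by
          rw [zpow_add₀ (two_ne_zero (α := ℝ)), zpow_natCast]
          have : k₂ * (2:ℝ) ^ (-(j':ℤ) - 1) ≤ (2 ^ L * k₁) * (2:ℝ) ^ (-(j':ℤ) - 1) := by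
            have hz : (0:ℝ) < (2:ℝ) ^ (-(j':ℤ) - 1) := zpow_pos (by norm_num) _
            nlinarith
          have h4 : k₁ * (2:ℝ) ^ (-(j:ℤ) - 1) < (2 ^ L * k₁) * (2:ℝ) ^ (-(j':ℤ) - 1) :=
            lt_of_lt_of_le key2 this
          nlinarith [zpow_pos (show (0:ℝ) < 2 by norm_num) (-(j:ℤ) - 1),
            zpow_pos (show (0:ℝ) < 2 by norm_num) (-(j':ℤ) - 1)]
        have key4 : -(j:ℤ) - 1 < (L:ℤ) + (-(j':ℤ) - 1) :=
          (zpow_lt_zpow_iff_right₀ (by norm_num : (1:ℝ) < 2)).mp key3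
        have : (j':ℤ) < (j:ℤ) + (L:ℤ) := by linarith
        exact_mod_cast this
    calc _ ≤ (2 * L : ℕ) * ∫⁻ s in Set.Ioo (0:ℝ) (k₂ * r), ENNReal.ofReal (ρ s / s) := key
      _ = ENNReal.ofReal (2 * L : ℕ) *
            ∫⁻ s in Set.Ioo (0:ℝ) (k₂ * r), ENNReal.ofReal (ρ s / s) := by
          rw [ENNReal.ofReal_natCast]
  · -- part (b)
    have hh : Measurable (fun s : ℝ => ENNReal.ofReal (ρ s / s * τ ((s ^ n)⁻¹))) := by
      apply Measurable.ennreal_ofReal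
      exact (hρm.div measurable_id).mul (hτm.comp ((measurable_id.pow_const n).inv))
    -- per-term bound
    have hterm : ∀ j : ℕ, (∫⁻ s in
          Set.Ioo (k₁ * ((2:ℝ) ^ (j:ℕ) * r)) (k₂ * ((2:ℝ) ^ (j:ℕ) * r)),
          ENNReal.ofReal (ρ s / s)) * ENNReal.ofReal (τ ((((2:ℝ) ^ (j:ℕ) * r) ^ n)⁻¹))
        ≤ ENNReal.ofReal (C'' ^ m) * ∫⁻ s in
          Set.Ioo (k₁ * ((2:ℝ) ^ (j:ℕ) * r)) (k₂ * ((2:ℝ) ^ (j:ℕ) * r)),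
          ENNReal.ofReal (ρ s / s * τ ((s ^ n)⁻¹)) := by
      intro j
      set R := (2:ℝ) ^ (j:ℕ) * r with hRdef
      have hR : 0 < R := by positivity
      rw [← lintegral_mul_const _ hg, ← lintegral_const_mul _ hh]
      refine setLIntegral_mono (by fun_prop) (fun s hs => ?_)
      obtain ⟨hs1, hs2⟩ := hs
      have hs0 : 0 < s := lt_trans (by positivity) hs1
      have hRn : (0:ℝ) < R ^ n := pow_pos hR n
      have hsn : (0:ℝ) < s ^ n := pow_pos hs0 n
      have ha : (0:ℝ) < (R ^ n)⁻¹ := by positivity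
      have hb : (0:ℝ) < (s ^ n)⁻¹ := by positivity
      have h1 : (R ^ n)⁻¹ ≤ 2 ^ m * (s ^ n)⁻¹ := by
        have hsk : s ^ n ≤ 2 ^ m * R ^ n := by
          calc s ^ n ≤ (k₂ * R) ^ n := pow_le_pow_left₀ hs0.le hs2.le n
            _ = k₂ ^ n * R ^ n := mul_pow _ _ _
            _ ≤ 2 ^ m * R ^ n := by nlinarith
        rw [← div_eq_mul_inv, le_div_iff₀ hsn, inv_mul_eq_div, div_le_iff₀ hRn]
        linarith
      have h2 : (s ^ n)⁻¹ ≤ 2 ^ m * (R ^ n)⁻¹ := by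
        have hkn : k₁ ^ n * R ^ n ≤ s ^ n := by
          rw [← mul_pow]; exact pow_le_pow_left₀ (by positivity) hs1.le n
        have hk1n : (0:ℝ) < k₁ ^ n := pow_pos hk₁ n
        have h1k : 1 ≤ 2 ^ m * k₁ ^ n := by
          rw [inv_le_iff_one_le_mul₀ hk1n] at hmk₁
          linarith [hmk₁]
        have hRk : R ^ n ≤ 2 ^ m * s ^ n := by nlinarith
        rw [← div_eq_mul_inv, le_div_iff₀ hRn, inv_mul_eq_div, div_le_iff₀ hsn]
        linarith
      have hτc : τ ((R ^ n)⁻¹) ≤ C'' ^ m * τ ((s ^ n)⁻¹) :=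
        doubling_comp τ C'' hC''1 hτpos hτd' m _ _ ha hb h1 h2
      have hρs : (0:ℝ) ≤ ρ s / s := le_of_lt (div_pos (hρpos s hs0) hs0)
      calc ENNReal.ofReal (ρ s / s) * ENNReal.ofReal (τ ((R ^ n)⁻¹))
          = ENNReal.ofReal (ρ s / s * τ ((R ^ n)⁻¹)) := (ENNReal.ofReal_mul hρs).symm
        _ ≤ ENNReal.ofReal (C'' ^ m * (ρ s / s * τ ((s ^ n)⁻¹))) := by
            refine ENNReal.ofReal_le_ofReal ?_
            have := mul_le_mul_of_nonneg_left hτc hρs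
            nlinarith
        _ = ENNReal.ofReal (C'' ^ m) * ENNReal.ofReal (ρ s / s * τ ((s ^ n)⁻¹)) :=
            ENNReal.ofReal_mul hCm.le
    have hover : (∑' j : ℕ, ∫⁻ s in
          Set.Ioo (k₁ * ((2:ℝ) ^ (j:ℕ) * r)) (k₂ * ((2:ℝ) ^ (j:ℕ) * r)),
          ENNReal.ofReal (ρ s / s * τ ((s ^ n)⁻¹)))
        ≤ (2 * L : ℕ) * ∫⁻ s in Set.Ioi (k₁ * r),
            ENNReal.ofReal (ρ s / s * τ ((s ^ n)⁻¹)) := by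
      refine overlap_bound _ hh _ (fun j => measurableSet_Ioo) _ measurableSet_Ioi
        (fun j s hs => ?_) L (fun j j' s hs hs' => ?_)
      · have h2j : (1:ℝ) ≤ (2:ℝ) ^ (j:ℕ) := one_le_pow₀ (by norm_num)
        have : k₁ * r ≤ k₁ * ((2:ℝ) ^ (j:ℕ) * r) := by
          nlinarith [mul_nonneg (mul_pos hk₁ hr).le (sub_nonneg.mpr h2j)]
        exact lt_of_le_of_lt this hs.1
      · have h1 : k₁ * ((2:ℝ) ^ (j':ℕ) * r) < s := hs'.1
        have h2 : s < k₂ * ((2:ℝ) ^ (j:ℕ) * r) := hs.2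
        have key2 : k₁ * (2:ℝ) ^ (j':ℕ) < k₂ * (2:ℝ) ^ (j:ℕ) := by
          have := lt_trans h1 h2; nlinarith
        have key3 : (2:ℝ) ^ (j':ℕ) < (2:ℝ) ^ (j + L) := by
          rw [pow_add]
          have : k₂ * (2:ℝ) ^ (j:ℕ) ≤ (2 ^ L * k₁) * (2:ℝ) ^ (j:ℕ) := by
            nlinarith [pow_pos (show (0:ℝ) < 2 by norm_num) j]
          have h4 := lt_of_lt_of_le key2 this
          nlinarith [pow_pos (show (0:ℝ) < 2 by norm_num) j,
            pow_pos (show (0:ℝ) < 2 by norm_num) j']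
        exact (pow_lt_pow_iff_right₀ (by norm_num : (1:ℝ) < 2)).mp key3
    calc (∑' j : ℕ, (∫⁻ s in
          Set.Ioo (k₁ * ((2:ℝ) ^ (j:ℕ) * r)) (k₂ * ((2:ℝ) ^ (j:ℕ) * r)),
          ENNReal.ofReal (ρ s / s)) * ENNReal.ofReal (τ ((((2:ℝ) ^ (j:ℕ) * r) ^ n)⁻¹)))
        ≤ ∑' j : ℕ, ENNReal.ofReal (C'' ^ m) * ∫⁻ s in
            Set.Ioo (k₁ * ((2:ℝ) ^ (j:ℕ) * r)) (k₂ * ((2:ℝ) ^ (j:ℕ) * r)),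
            ENNReal.ofReal (ρ s / s * τ ((s ^ n)⁻¹)) := ENNReal.tsum_le_tsum hterm
      _ = ENNReal.ofReal (C'' ^ m) * ∑' j : ℕ, ∫⁻ s in
            Set.Ioo (k₁ * ((2:ℝ) ^ (j:ℕ) * r)) (k₂ * ((2:ℝ) ^ (j:ℕ) * r)),
            ENNReal.ofReal (ρ s / s * τ ((s ^ n)⁻¹)) := ENNReal.tsum_mul_left
      _ ≤ ENNReal.ofReal (C'' ^ m) * ((2 * L : ℕ) * ∫⁻ s in Set.Ioi (k₁ * r),
            ENNReal.ofReal (ρ s / s * τ ((s ^ n)⁻¹))) := by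
          exact mul_le_mul_right hover _
      _ = ENNReal.ofReal ((2 * L : ℕ) * C'' ^ m) * ∫⁻ s in Set.Ioi (k₁ * r),
            ENNReal.ofReal (ρ s / s * τ ((s ^ n)⁻¹)) := by
          rw [ENNReal.ofReal_mul (by positivity), ENNReal.ofReal_natCast, ← mul_assoc,
            mul_comm (ENNReal.ofReal (C'' ^ m))]

end
end

section
/- Let n ≥ 1, let Φ and Ψ be Young functions, and let ρ:(0,∞)→(0,∞) satisfy ∫₀¹ ρ(t)/t dt < ∞ and the condition that there exist constants C > 0 and 0 < k₁ < k₂ with sup_{r/2 ≤ t ≤ r} ρ(t) ≤ C ∫_{k₁r}^{k₂r} ρ(t)/t dt for all r > 0. Assume there is C > 0 with Φ^{-1}(r^{-n}) ∫₀^r ρ(t)/t dt + ∫_r^∞ ρ(t) Φ^{-1}(t^{-n}) dt/t ≤ C Ψ^{-1}(r^{-n}) for all r > 0. Then for any constant C₀ > 0 there exists C₁ > 0 such that for every nonnegative f ∈ L^Φ(ℝⁿ) with f ≠ 0 and every x ∈ ℝⁿ: I_ρ f(x) ≤ C₁ ‖f‖_{L^Φ} · Ψ^{-1}( Φ( Mf(x)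 / (C₀‖f‖_{L^Φ}) ) ). -/
open MeasureTheory Metric Set Filter
open scoped ENNReal NNReal Topology

noncomputable section

variable {α : Type*}

section Helpers

variable {Φ : ℝ≥0∞ → ℝ≥0∞}

lemma young_mono (h : IsYoung Φ) : Monotone Φ := by
  intro a b hab
  rcases eq_or_lt_of_le hab with rfl | hlt
  · exact le_rfl
  · rw [h.left_continuous b]
    exact le_biSup _ hlt

lemma young_smul (h : IsYoung Φ) {θ x : ℝ≥0∞} (hθ : θ ≤ 1) : Φ (θ * x) ≤ θ * Φ x := by
  have hsum : θ + (1 - θ) = 1 := by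
    rw [add_comm]; exact tsub_add_cancel_of_le hθ
  have := h.convex θ (1 - θ) x 0 hsum
  simpa [h.map_zero] using this

lemma young_smul_ge (h : IsYoung Φ) {c x : ℝ≥0∞} (hc : 1 ≤ c) (hctop : c ≠ ⊤) :
    c * Φ x ≤ Φ (c * x) := by
  have hc0 : c ≠ 0 := by intro h0; simp [h0] at hc
  have h1 : Φ (c⁻¹ * (c * x)) ≤ c⁻¹ * Φ (c * x) :=
    young_smul h (by
      rw [ENNReal.inv_le_iff_inv_le, inv_one]; exact hc)
  have hx : c⁻¹ * (c * x) = x := by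
    rw [← mul_assoc, ENNReal.inv_mul_cancel hc0 hctop, one_mul]
  rw [hx] at h1
  calc c * Φ x ≤ c * (c⁻¹ * Φ (c * x)) := by exact mul_le_mul_right h1 c
    _ = (c * c⁻¹) * Φ (c * x) := by ring
    _ = Φ (c * x) := by rw [ENNReal.mul_inv_cancel hc0 hctop, one_mul]

lemma yInv_mono (Φ : ℝ≥0∞ → ℝ≥0∞) : Monotone (yInv Φ) := by
  intro a b hab
  exact sInf_le_sInf (fun r hr => lt_of_le_of_lt hab hr)

lemma le_yInv (h : IsYoung Φ) {u s : ℝ≥0∞} (hus : Φ u ≤ s) : u ≤ yInv Φ s := by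
  apply le_sInf
  intro v hv
  by_contra hc
  exact absurd (lt_of_le_of_lt hus hv) (not_lt.2 (young_mono h (le_of_not_ge hc)))

lemma yInv_lt_imp (h : IsYoung Φ) {s v : ℝ≥0∞} (hv : yInv Φ s < v) : s < Φ v := by
  have hne : {r : ℝ≥0∞ | s < Φ r}.Nonempty := by
    by_contra hne
    rw [Set.not_nonempty_iff_eq_empty] at hne
    rw [yInv, hne, sInf_empty] at hv
    exact absurd hv (by simp)
  obtain ⟨w, hw, hwv⟩ := exists_lt_of_csInf_lt hne hv
  exact lt_of_lt_of_le hw (young_mono h hwv.le)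

lemma yInv_pos (h : IsYoung Φ) {s : ℝ≥0∞} (hs : 0 < s) : 0 < yInv Φ s := by
  have hIio : Iio s ∈ 𝓝 (0 : ℝ≥0∞) := IsOpen.mem_nhds isOpen_Iio hs
  have hev : ∀ᶠ v in nhdsWithin 0 (Set.Ioi 0), Φ v < s :=
    h.tendsto_zero.eventually (eventually_mem_set.2 hIio)
  have hb : (nhdsWithin (0:ℝ≥0∞) (Set.Ioi 0)).HasBasis (fun a : ℝ≥0∞ => 0 < a)
      (fun a => Iio a ∩ Ioi 0) := ENNReal.nhds_zero_basis.inf_principal _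
  obtain ⟨δ, hδ, hδp⟩ := hb.eventually_iff.1 hev
  apply lt_of_lt_of_le hδ
  apply le_sInf
  intro v hv
  by_contra hc
  push_neg at hc
  rcases eq_or_lt_of_le (show (0:ℝ≥0∞) ≤ v from zero_le) with rfl | hv0
  · simp only [Set.mem_setOf_eq, h.map_zero] at hv
    exact absurd hv (not_lt.2 (zero_le : (0:ℝ≥0∞) ≤ s))
  · exact absurd (hδp ⟨hc, hv0⟩) (not_lt.2 (le_of_lt hv))

lemma yInv_lt_top (h : IsYoung Φ) {s : ℝ≥0∞} (hs : s ≠ ⊤) : yInv Φ s < ⊤ := by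
  have : Ioi s ∈ 𝓝 (⊤ : ℝ≥0∞) := IsOpen.mem_nhds isOpen_Ioi (lt_top_iff_ne_top.2 hs)
  obtain ⟨r₀, hr₀⟩ := (h.tendsto_top.eventually (eventually_mem_set.2 this)).exists
  exact lt_of_le_of_lt (sInf_le hr₀) (ENNReal.coe_lt_top)

lemma yInv_top (Φ : ℝ≥0∞ → ℝ≥0∞) : yInv Φ ⊤ = ⊤ := by
  rw [yInv]
  rw [show {r : ℝ≥0∞ | ⊤ < Φ r} = ∅ by ext r; simp, sInf_empty]

lemma yInv_scale (h : IsYoung Φ) {c s : ℝ≥0∞} (hc : c ≠ ⊤) :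
    yInv Φ (c * s) ≤ max 1 c * yInv Φ s := by
  rcases le_total c 1 with hc1 | hc1
  · rw [max_eq_left hc1, one_mul]
    exact yInv_mono Φ (mul_le_of_le_one_left zero_le hc1)
  · rw [max_eq_right hc1]
    have hc0 : c ≠ 0 := by intro h0; rw [h0] at hc1; exact absurd hc1 (by simp)
    have key : ∀ v ∈ {r : ℝ≥0∞ | s < Φ r}, yInv Φ (c * s) ≤ c * v := by
      intro v hv
      apply sInf_le
      have h1 : c * Φ v ≤ Φ (c * v) := young_smul_ge h hc1 hc
      have h2 : c * s < c * Φ v := (ENNReal.mul_lt_mul_iff_right hc0 hc).2 hv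
      exact lt_of_lt_of_le h2 h1
    have key2 : yInv Φ (c * s) / c ≤ yInv Φ s := by
      apply le_sInf
      intro v hv
      rw [ENNReal.div_le_iff_le_mul (Or.inl hc0) (Or.inl hc)]
      exact le_trans (key v hv) (le_of_eq (mul_comm c v))
    calc yInv Φ (c * s) ≤ (yInv Φ (c * s) / c) * c := by
          rw [ENNReal.div_mul_cancel hc0 hc]
        _ ≤ c * yInv Φ s := by
          rw [mul_comm c (yInv Φ s)]
          exact mul_le_mul_left key2 c

end Helpers
section Helpers2

variable {Φ : ℝ≥0∞ → ℝ≥0∞}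

lemma lux_pos (h : IsYoung Φ) {α : Type*} [MeasurableSpace α] {μ : Measure α} [SigmaFinite μ]
    {g : α → ℝ≥0∞} (hg : Measurable g) (hgtop : ∀ y, g y ≠ ⊤) (hgz : ¬ g =ᵐ[μ] 0) :
    0 < luxNorm Φ μ g := by
  have hμ : μ {y | g y ≠ 0} ≠ 0 := by
    intro h0
    exact hgz (by rwa [Filter.EventuallyEq, ae_iff])
  have hcover : {y | g y ≠ 0} = ⋃ k : ℕ, {y | ((k : ℝ≥0∞) + 1)⁻¹ < g y} := by
    ext y
    simp only [Set.mem_setOf_eq, Set.mem_iUnion]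
    constructor
    · intro hy
      obtain ⟨m, hm⟩ := ENNReal.exists_inv_nat_lt hy
      exact ⟨m, lt_of_le_of_lt (by
        apply ENNReal.inv_le_inv.2
        exact le_add_of_nonneg_right zero_le) hm⟩
    · rintro ⟨k, hk⟩
      exact fun h0 => by simp [h0] at hk
  obtain ⟨k, hk⟩ : ∃ k : ℕ, μ {y | ((k : ℝ≥0∞) + 1)⁻¹ < g y} ≠ 0 := by
    by_contra hc
    push_neg at hc
    exact hμ (by rw [hcover]; exact measure_iUnion_null hc)
  set c : ℝ≥0∞ := ((k : ℝ≥0∞) + 1)⁻¹ with hc_def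
  have hc0 : c ≠ 0 := ENNReal.inv_ne_zero.2 (by simp)
  have hct : c ≠ ⊤ := by
    rw [hc_def, Ne, ENNReal.inv_eq_top]
    simp
  have hmeas : MeasurableSet {y | c < g y} := hg measurableSet_Ioi
  obtain ⟨T, hTm, hTsub, hT0, hTt⟩ :=
    MeasureTheory.Measure.exists_subset_measure_lt_top hmeas (pos_iff_ne_zero.2 hk)
  have hinv_ne_top : (μ T)⁻¹ ≠ ⊤ := ENNReal.inv_ne_top.2 hT0.ne'
  obtain ⟨r₀, hr₀⟩ := (h.tendsto_top.eventually (eventually_mem_set.2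
    (IsOpen.mem_nhds isOpen_Ioi (lt_top_iff_ne_top.2 hinv_ne_top)))).exists
  set R : ℝ≥0∞ := (r₀ : ℝ≥0∞) + 1 with hR_def
  have hR0 : R ≠ 0 := by simp [hR_def]
  have hRt : R ≠ ⊤ := by simp [hR_def]
  have hΦR : (μ T)⁻¹ < Φ R := lt_of_lt_of_le hr₀ (young_mono h (le_add_of_nonneg_right zero_le))
  have hlb : c / R ≤ luxNorm Φ μ g := by
    apply le_sInf
    rintro lam ⟨hl0, hlt, hint⟩
    by_contra hcon
    push_neg at hcon
    have h1 : lam * R < c := (ENNReal.lt_div_iff_mul_lt (Or.inl hR0) (Or.inl hRt)).1 hcon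
    have h2 : R < c / lam := by
      rw [ENNReal.lt_div_iff_mul_lt (Or.inl hl0.ne') (Or.inl hlt)]
      rwa [mul_comm]
    have hptwise : ∀ y ∈ T, Φ R ≤ Φ (g y / lam) := by
      intro y hy
      apply young_mono h
      apply le_trans h2.le
      exact ENNReal.div_le_div_right (hTsub hy).le lam
    have hint2 : Φ R * μ T ≤ ∫⁻ y, Φ (g y / lam) ∂μ := by
      calc Φ R * μ T = ∫⁻ _ in T, Φ R ∂μ := (setLIntegral_const T _).symm
        _ ≤ ∫⁻ y in T, Φ (g y / lam) ∂μ := by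
            apply setLIntegral_mono ((young_mono h).measurable.comp (hg.div_const lam)) hptwise
        _ ≤ ∫⁻ y, Φ (g y / lam) ∂μ := setLIntegral_le_lintegral _ _
    have hbig : 1 < Φ R * μ T := by
      calc 1 = (μ T)⁻¹ * μ T := (ENNReal.inv_mul_cancel hT0.ne' hTt.ne).symm
        _ < Φ R * μ T := by
            exact (ENNReal.mul_lt_mul_iff_left hT0.ne' hTt.ne).2 hΦR
    exact absurd (le_trans hint2 hint) (not_le.2 hbig)
  exact lt_of_lt_of_le (ENNReal.div_pos hc0 hRt) hlb

lemma lux_setLintegral_le (h : IsYoung Φ) {α : Type*} [MeasurableSpace α] {μ : Measure α}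
    {g : α → ℝ≥0∞} (hgtop : ∀ y, g y ≠ ⊤) {B : Set α}
    (hB0 : μ B ≠ 0) (hBt : μ B ≠ ⊤) (hL : luxNorm Φ μ g ≠ ⊤) :
    ∫⁻ y in B, g y ∂μ ≤ luxNorm Φ μ g * (4 * (yInv Φ ((μ B)⁻¹) * μ B)) := by
  set s : ℝ≥0∞ := (μ B)⁻¹ with hs_def
  have hs0 : s ≠ 0 := ENNReal.inv_ne_zero.2 hBt
  have hst : s ≠ ⊤ := ENNReal.inv_ne_top.2 hB0
  set τ : ℝ≥0∞ := yInv Φ s with hτ_def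
  have hτ0 : 0 < τ := yInv_pos h (pos_iff_ne_zero.2 hs0)
  have hτt : τ < ⊤ := yInv_lt_top h hst
  set c : ℝ≥0∞ := 4 * (τ * μ B) with hc_def
  have hΦ2τ : s < Φ (2 * τ) := by
    apply yInv_lt_imp h
    rw [two_mul]
    exact ENNReal.lt_add_right hτt.ne hτ0.ne'
  have key : ∀ lam ∈ {lam : ℝ≥0∞ | 0 < lam ∧ lam ≠ ⊤ ∧ (∫⁻ x, Φ (g x / lam) ∂μ) ≤ 1},
      ∫⁻ y in B, g y ∂μ ≤ lam * c := by
    rintro lam ⟨hl0, hlt, hint⟩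
    have hptwise : ∀ y, g y / lam ≤ 2 * τ + (2 * τ / s) * Φ (g y / lam) := by
      intro y
      set G := g y / lam with hG_def
      by_cases hG : G ≤ 2 * τ
      · exact le_add_right hG
      · push_neg at hG
        have hGt : G ≠ ⊤ := (ENNReal.div_lt_top (hgtop y) hl0.ne').ne
        have hG0 : G ≠ 0 := (lt_of_le_of_lt zero_le hG).ne'
        have hθ : 2 * τ / G ≤ 1 := by
          rw [ENNReal.div_le_iff_le_mul (Or.inl hG0) (Or.inl hGt), one_mul]
          exact hG.le
        have h1 : Φ (2 * τ / G * G) ≤ 2 * τ / G * Φ G := young_smul h hθ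
        rw [ENNReal.div_mul_cancel hG0 hGt] at h1
        have h2 : G * s ≤ 2 * τ * Φ G := by
          calc G * s ≤ G * Φ (2 * τ) := mul_le_mul_right hΦ2τ.le G
            _ ≤ G * (2 * τ / G * Φ G) := mul_le_mul_right h1 G
            _ = (G * (2 * τ / G)) * Φ G := by ring
            _ = 2 * τ * Φ G := by rw [ENNReal.mul_div_cancel hG0 hGt]
        have h3 : G ≤ 2 * τ * Φ G / s :=
          (ENNReal.le_div_iff_mul_le (Or.inl hs0) (Or.inl hst)).2 h2
        calc G ≤ 2 * τ * Φ G / s := h3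
          _ = (2 * τ / s) * Φ G := by rw [div_eq_mul_inv, div_eq_mul_inv]; ring
          _ ≤ 2 * τ + (2 * τ / s) * Φ G := le_add_self
    have hdiv_ne_top : 2 * τ / s ≠ ⊤ := (ENNReal.div_lt_top (by
      exact ENNReal.mul_ne_top (by norm_num) hτt.ne) hs0).ne
    have hint2 : ∫⁻ y in B, g y / lam ∂μ ≤ c := by
      calc ∫⁻ y in B, g y / lam ∂μ
          ≤ ∫⁻ y in B, (2 * τ + (2 * τ / s) * Φ (g y / lam)) ∂μ :=
            lintegral_mono (fun y => hptwise y)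
        _ = ∫⁻ _ in B, 2 * τ ∂μ + ∫⁻ y in B, (2 * τ / s) * Φ (g y / lam) ∂μ :=
            lintegral_add_left measurable_const _
        _ = 2 * τ * μ B + (2 * τ / s) * ∫⁻ y in B, Φ (g y / lam) ∂μ := by
            rw [setLIntegral_const, lintegral_const_mul' _ _ hdiv_ne_top]
        _ ≤ 2 * τ * μ B + (2 * τ / s) * 1 := by
            apply add_le_add_right
            apply mul_le_mul_right
            exact le_trans (setLIntegral_le_lintegral _ _) hint
        _ = 2 * τ * μ B + 2 * τ * μ B := by
            rw [mul_one, hs_def, div_eq_mul_inv, inv_inv]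
        _ = c := by rw [hc_def]; ring
    have hgob : ∀ y, g y = lam * (g y / lam) := by
      intro y
      rw [ENNReal.mul_div_cancel hl0.ne' hlt]
    calc ∫⁻ y in B, g y ∂μ = ∫⁻ y in B, lam * (g y / lam) ∂μ := by
          apply lintegral_congr (fun y => hgob y)
      _ = lam * ∫⁻ y in B, g y / lam ∂μ := lintegral_const_mul' _ _ hlt
      _ ≤ lam * c := mul_le_mul_right hint2 lam
  have hne : {lam : ℝ≥0∞ | 0 < lam ∧ lam ≠ ⊤ ∧ (∫⁻ x, Φ (g x / lam) ∂μ) ≤ 1}.Nonempty := by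
    by_contra hn
    rw [Set.not_nonempty_iff_eq_empty] at hn
    rw [luxNorm, hn, sInf_empty] at hL
    exact hL rfl
  have hct : c ≠ ⊤ := by
    rw [hc_def]
    exact ENNReal.mul_ne_top (by norm_num) (ENNReal.mul_ne_top hτt.ne hBt)
  have hc0 : c ≠ 0 := by
    rw [hc_def]
    exact (ENNReal.mul_pos (by norm_num) (ENNReal.mul_pos hτ0.ne' hB0).ne').ne'
  have hdivle : (∫⁻ y in B, g y ∂μ) / c ≤ luxNorm Φ μ g := by
    apply le_sInf
    intro lam hlam
    rw [ENNReal.div_le_iff_le_mul (Or.inl hc0) (Or.inl hct)]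
    exact key lam hlam
  exact (ENNReal.div_le_iff_le_mul (Or.inl hc0) (Or.inl hct)).1 hdivle

end Helpers2
section Helpers3

lemma maxOp_ball_bound {n : ℕ} (f : Euc n → ℝ) (x : Euc n) {r : ℝ} (hr : 0 < r) :
    ∫⁻ y in ball x r, (‖f y‖₊ : ℝ≥0∞) ≤ maxOp n f x * volume (ball x r) := by
  have h0 : volume (ball x r) ≠ 0 := (measure_ball_pos volume x hr).ne'
  have ht : volume (ball x r) ≠ ⊤ := measure_ball_lt_top.ne
  have h1 : (volume (ball x r))⁻¹ * ∫⁻ y in ball x r, (‖f y‖₊ : ℝ≥0∞) ≤ maxOp n f x := by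
    rw [maxOp]
    exact le_iSup₂ (f := fun (r : ℝ) (_ : 0 < r) =>
      (volume (ball x r))⁻¹ * ∫⁻ y in ball x r, (‖f y‖₊ : ℝ≥0∞)) r hr
  calc ∫⁻ y in ball x r, (‖f y‖₊ : ℝ≥0∞)
      = volume (ball x r) * ((volume (ball x r))⁻¹ * ∫⁻ y in ball x r, (‖f y‖₊ : ℝ≥0∞)) := by
        rw [← mul_assoc, ENNReal.mul_inv_cancel h0 ht, one_mul]
    _ ≤ volume (ball x r) * maxOp n f x := mul_le_mul_right h1 _
    _ = maxOp n f x * volume (ball x r) := mul_comm _ _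

lemma maxOp_pos {n : ℕ} {f : Euc n → ℝ} (hf : Measurable f)
    (hfz : ¬ f =ᵐ[volume] 0) (x : Euc n) : 0 < maxOp n f x := by
  have hexists : ∃ r : ℝ, 0 < r ∧ ∫⁻ y in ball x r, (‖f y‖₊ : ℝ≥0∞) ≠ 0 := by
    by_contra hc
    push_neg at hc
    have hae : ∀ k : ℕ, ∀ᵐ y ∂volume, y ∈ ball x ((k : ℝ) + 1) → (‖f y‖₊ : ℝ≥0∞) = 0 := by
      intro k
      have hz := hc ((k : ℝ) + 1) (by positivity)
      have := (lintegral_eq_zero_iff hf.nnnorm.coe_nnreal_ennreal).1 hz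
      exact (ae_restrict_iff' measurableSet_ball).1 this
    have hall : ∀ᵐ y ∂volume, ∀ k : ℕ, y ∈ ball x ((k : ℝ) + 1) → (‖f y‖₊ : ℝ≥0∞) = 0 :=
      ae_all_iff.2 hae
    apply hfz
    filter_upwards [hall] with y hy
    obtain ⟨k, hk⟩ := exists_nat_gt (dist y x)
    have : (‖f y‖₊ : ℝ≥0∞) = 0 := hy k (by
      rw [mem_ball]
      exact lt_of_lt_of_le hk (by linarith))
    simpa using this
  obtain ⟨r, hr, hne⟩ := hexists
  have h1 : 0 < (volume (ball x r))⁻¹ * ∫⁻ y in ball x r, (‖f y‖₊ : ℝ≥0∞) :=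
    ENNReal.mul_pos (ENNReal.inv_ne_zero.2 measure_ball_lt_top.ne) hne
  apply lt_of_lt_of_le h1
  rw [maxOp]
  exact le_iSup₂ (f := fun (r : ℝ) (_ : 0 < r) =>
    (volume (ball x r))⁻¹ * ∫⁻ y in ball x r, (‖f y‖₊ : ℝ≥0∞)) r hr

end Helpers3
/-- Hedberg-type pointwise estimate for `I_ρ`. -/
theorem stmt4 (n : ℕ) (hn : 1 ≤ n) (Φ Ψ : ℝ≥0∞ → ℝ≥0∞)
    (hΦ : IsYoung Φ) (hΨ : IsYoung Ψ)
    (ρ : ℝ → ℝ) (hρm : Measurable ρ) (hρpos : ∀ t > (0:ℝ), 0 < ρ t)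
    (hρ1 : RhoInt ρ) (hρ2 : RhoSup ρ) (hcond : CondOrl n Φ Ψ ρ) :
    ∀ C₀ : ℝ, 0 < C₀ → ∃ C₁ : ℝ, 0 < C₁ ∧ ∀ f : Euc n → ℝ, Measurable f →
      (∀ x, 0 ≤ f x) → luxNorm Φ volume (enn f) ≠ ⊤ → ¬ (f =ᵐ[volume] 0) →
      ∀ x : Euc n,
        ENNReal.ofReal (Irho n ρ f x) ≤
          ENNReal.ofReal C₁ * luxNorm Φ volume (enn f) *
            yInv Ψ (Φ (maxOp n f x / (ENNReal.ofReal C₀ * luxNorm Φ volume (enn f)))) := by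
  intro C₀ hC₀
  haveI : Nonempty (Fin n) := Fin.pos_iff_nonempty.1 (by omega)
  obtain ⟨CS, k₁, k₂, hCS, hk₁, hk₁₂, hsup⟩ := hρ2
  obtain ⟨CO, hCO, hco⟩ := hcond
  have hk₂ : 0 < k₂ := lt_trans hk₁ hk₁₂
  -- geometric constants
  set cn : ℝ≥0∞ := volume (ball (0 : Euc n) 1) with hcn_def
  have hcn0 : cn ≠ 0 := (measure_ball_pos volume _ one_pos).ne'
  have hcnt : cn ≠ ⊤ := measure_ball_lt_top.ne
  set cK : ℝ≥0∞ := ENNReal.ofReal ((k₂ / k₁) ^ n) with hcK_def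
  have hcK0 : cK ≠ 0 := (ENNReal.ofReal_pos.2 (by positivity)).ne'
  have hcKt : cK ≠ ⊤ := ENNReal.ofReal_ne_top
  set cmax : ℝ≥0∞ := max 1 (cn⁻¹ * ENNReal.ofReal ((2 * k₁) ^ n)) with hcmax_def
  have hcmaxt : cmax ≠ ⊤ := by
    rw [hcmax_def]
    rw [Ne, max_eq_top]
    push_neg
    exact ⟨ENNReal.one_ne_top, ENNReal.mul_ne_top (ENNReal.inv_ne_top.2 hcn0) ENNReal.ofReal_ne_top⟩
  set c2 : ℝ≥0∞ := max 1 (ENNReal.ofReal ((2:ℝ) ^ n)) with hc2_def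
  have hc2t : c2 ≠ ⊤ := by
    rw [hc2_def, Ne, max_eq_top]
    push_neg
    exact ⟨ENNReal.one_ne_top, ENNReal.ofReal_ne_top⟩
  set cF : ℝ≥0∞ := 4 * cmax * cn * cK with hcF_def
  have hcFt : cF ≠ ⊤ := by
    rw [hcF_def]
    exact ENNReal.mul_ne_top (ENNReal.mul_ne_top (ENNReal.mul_ne_top (by norm_num) hcmaxt) hcnt) hcKt
  set Ktot : ℝ≥0∞ := ENNReal.ofReal CS *
      (cn * cK * ENNReal.ofReal C₀ * ENNReal.ofReal CO + cF * ENNReal.ofReal CO * c2) with hK_def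
  have hKt : Ktot ≠ ⊤ := by
    rw [hK_def]
    apply ENNReal.mul_ne_top ENNReal.ofReal_ne_top
    apply ENNReal.add_ne_top.2
    constructor
    · exact ENNReal.mul_ne_top (ENNReal.mul_ne_top (ENNReal.mul_ne_top hcnt hcKt)
        ENNReal.ofReal_ne_top) ENNReal.ofReal_ne_top
    · exact ENNReal.mul_ne_top (ENNReal.mul_ne_top hcFt ENNReal.ofReal_ne_top) hc2t
  have hK0 : Ktot ≠ 0 := by
    rw [hK_def]
    apply (ENNReal.mul_pos (ENNReal.ofReal_pos.2 hCS).ne' ?_).ne'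
    intro h
    rw [add_eq_zero] at h
    have hX : cn * cK * ENNReal.ofReal C₀ * ENNReal.ofReal CO ≠ 0 :=
      (ENNReal.mul_pos (ENNReal.mul_pos (ENNReal.mul_pos hcn0 hcK0).ne'
        (ENNReal.ofReal_pos.2 hC₀).ne').ne' (ENNReal.ofReal_pos.2 hCO).ne').ne'
    exact hX h.1
  refine ⟨Ktot.toReal + 1, by positivity, ?_⟩
  have hKle : Ktot ≤ ENNReal.ofReal (Ktot.toReal + 1) := by
    rw [ENNReal.ofReal_add ENNReal.toReal_nonneg zero_le_one, ENNReal.ofReal_toReal hKt]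
    exact le_self_add
  intro f hfm hfpos hLt hfz x
  set L : ℝ≥0∞ := luxNorm Φ volume (enn f) with hL_def
  set A : ℝ≥0∞ := maxOp n f x with hA_def
  have hfz' : ¬ (enn f =ᵐ[volume] 0) := by
    intro hc
    apply hfz
    filter_upwards [hc] with y hy
    simpa [enn] using hy
  have hL0 : 0 < L := lux_pos hΦ hfm.nnnorm.coe_nnreal_ennreal (fun y => ENNReal.coe_ne_top) hfz'
  have hA0 : 0 < A := maxOp_pos hfm hfz x
  set u : ℝ≥0∞ := A / (ENNReal.ofReal C₀ * L) with hu_def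
  -- the top case
  rcases eq_or_ne A ⊤ with hAt | hAt
  · have hutop : u = ⊤ := by
      rw [hu_def, hAt]
      exact ENNReal.top_div_of_ne_top (ENNReal.mul_ne_top ENNReal.ofReal_ne_top hLt)
    rw [hutop, hΦ.map_top, yInv_top, ENNReal.mul_top]
    · exact le_top
    · exact (ENNReal.mul_pos (ENNReal.ofReal_pos.2 (by positivity)).ne' hL0.ne').ne'
  have hCL0 : ENNReal.ofReal C₀ * L ≠ 0 :=
    (ENNReal.mul_pos (ENNReal.ofReal_pos.2 hC₀).ne' hL0.ne').ne'
  have hCLt : ENNReal.ofReal C₀ * L ≠ ⊤ := ENNReal.mul_ne_top ENNReal.ofReal_ne_top hLt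
  have hu0 : u ≠ 0 := (ENNReal.div_pos hA0.ne' hCLt).ne'
  have hut : u ≠ ⊤ := (ENNReal.div_lt_top hAt hCL0).ne
  have hAu : A / u = ENNReal.ofReal C₀ * L := by
    rw [hu_def, div_eq_mul_inv, div_eq_mul_inv,
      ENNReal.mul_inv (Or.inl hA0.ne') (Or.inl hAt), inv_inv, ← mul_assoc,
      ENNReal.mul_inv_cancel hA0.ne' hAt, one_mul]
  -- pointwise kernel data
  set w : Euc n → ℝ≥0∞ := fun y => (ENNReal.ofReal ((dist x y) ^ n))⁻¹ * (‖f y‖₊ : ℝ≥0∞)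
    with hw_def
  have hwm : Measurable w := by
    rw [hw_def]
    exact ((((measurable_const.dist measurable_id).pow_const n).ennreal_ofReal).inv).mul
      hfm.nnnorm.coe_nnreal_ennreal
  have hrhm : Measurable (fun t : ℝ => ENNReal.ofReal (ρ t / t)) :=
    (hρm.div measurable_id).ennreal_ofReal
  have hyim : Measurable (fun t : ℝ => yInv Φ (rinv n t)) := by
    apply (Monotone.measurable (yInv_mono Φ)).comp
    exact (((measurable_id.pow_const n).inv).ennreal_ofReal)
  have hax : ∀ᵐ y ∂(volume : Measure (Euc n)), y ≠ x := by
    rw [ae_iff]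
    have hxx : {y : Euc n | ¬ y ≠ x} = {x} := by ext y; simp
    rw [hxx]
    exact measure_singleton x
  set I₀ : ℝ≥0∞ :=
    ∫⁻ y, ENNReal.ofReal (ρ (dist x y) / (dist x y) ^ n) * (‖f y‖₊ : ℝ≥0∞) with hI₀_def
  -- step 0
  have step0 : ENNReal.ofReal (Irho n ρ f x) ≤ I₀ := by
    calc ENNReal.ofReal (Irho n ρ f x) ≤ (‖Irho n ρ f x‖₊ : ℝ≥0∞) := Real.ofReal_le_enorm _
      _ ≤ ∫⁻ y, (‖(ρ (dist x y) / (dist x y) ^ n) * f y‖₊ : ℝ≥0∞) :=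
          enorm_integral_le_lintegral_enorm _
      _ = I₀ := by
          rw [hI₀_def]
          apply lintegral_congr_ae
          filter_upwards [hax] with y hy
          have hd : 0 < dist x y := dist_pos.2 (Ne.symm hy)
          rw [nnnorm_mul, ENNReal.coe_mul]
          congr 1
          exact Real.enorm_eq_ofReal (le_of_lt (div_pos (hρpos _ hd) (pow_pos hd n)))
  -- step 1 : pointwise kernel bound
  have step1 : I₀ ≤ ENNReal.ofReal CS *
      ∫⁻ y, (∫⁻ s' in Ioo (2*k₁*dist x y) (2*k₂*dist x y), ENNReal.ofReal (ρ s' / s')) * w y := by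
    rw [hI₀_def, ← lintegral_const_mul' _ _ ENNReal.ofReal_ne_top]
    apply lintegral_mono_ae
    filter_upwards [hax] with y hy
    have hd : 0 < dist x y := dist_pos.2 (Ne.symm hy)
    have hk : ENNReal.ofReal (ρ (dist x y)) ≤
        ENNReal.ofReal CS * ∫⁻ s' in Ioo (2*k₁*dist x y) (2*k₂*dist x y),
          ENNReal.ofReal (ρ s' / s') := by
      have h1 := hsup (2*(dist x y)) (by positivity) (dist x y) ⟨by linarith, by linarith⟩
      rw [show k₁*(2*(dist x y)) = 2*k₁*dist x y by ring,
        show k₂*(2*(dist x y)) = 2*k₂*dist x y by ring] at h1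
      exact h1
    calc ENNReal.ofReal (ρ (dist x y) / (dist x y) ^ n) * (‖f y‖₊ : ℝ≥0∞)
        = ENNReal.ofReal (ρ (dist x y)) * w y := by
          rw [hw_def, ENNReal.ofReal_div_of_pos (pow_pos hd n), div_eq_mul_inv, mul_assoc]
      _ ≤ (ENNReal.ofReal CS * ∫⁻ s' in Ioo (2*k₁*dist x y) (2*k₂*dist x y),
            ENNReal.ofReal (ρ s' / s')) * w y := mul_le_mul_left hk _
      _ = ENNReal.ofReal CS * ((∫⁻ s' in Ioo (2*k₁*dist x y) (2*k₂*dist x y),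
            ENNReal.ofReal (ρ s' / s')) * w y) := by rw [mul_assoc]
  -- the sets S_t
  have hStm : ∀ t : ℝ, MeasurableSet {y : Euc n | 2*k₁*dist x y < t ∧ t < 2*k₂*dist x y} := by
    intro t
    apply MeasurableSet.inter
    · exact measurableSet_lt ((measurable_const.dist measurable_id).const_mul _) measurable_const
    · exact measurableSet_lt measurable_const ((measurable_const.dist measurable_id).const_mul _)
  set V : ℝ → ℝ≥0∞ := fun t =>
    ∫⁻ y in {y : Euc n | 2*k₁*dist x y < t ∧ t < 2*k₂*dist x y}, w y with hV_def
  -- step 2 : Tonelli swap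
  have hswap : (∫⁻ y, (∫⁻ s' in Ioo (2*k₁*dist x y) (2*k₂*dist x y),
        ENNReal.ofReal (ρ s' / s')) * w y)
      = ∫⁻ t, ENNReal.ofReal (ρ t / t) * V t := by
    set F : Euc n → ℝ → ℝ≥0∞ := fun y t =>
      Set.indicator {p : Euc n × ℝ | 2*k₁*dist x p.1 < p.2 ∧ p.2 < 2*k₂*dist x p.1}
        (fun p => ENNReal.ofReal (ρ p.2 / p.2) * w p.1) (y, t) with hF_def
    have hFm : Measurable (Function.uncurry F) := by
      have hset : MeasurableSet {p : Euc n × ℝ | 2*k₁*dist x p.1 < p.2 ∧ p.2 < 2*k₂*dist x p.1} := by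
        apply MeasurableSet.inter
        · exact measurableSet_lt ((measurable_const.dist measurable_fst).const_mul _)
            measurable_snd
        · exact measurableSet_lt measurable_snd
            ((measurable_const.dist measurable_fst).const_mul _)
      have hgm : Measurable (fun p : Euc n × ℝ => ENNReal.ofReal (ρ p.2 / p.2) * w p.1) :=
        (hrhm.comp measurable_snd).mul (hwm.comp measurable_fst)
      exact hgm.indicator hset
    calc (∫⁻ y, (∫⁻ s' in Ioo (2*k₁*dist x y) (2*k₂*dist x y),
          ENNReal.ofReal (ρ s' / s')) * w y)
        = ∫⁻ y, ∫⁻ t, F y t := by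
          apply lintegral_congr
          intro y
          have hFy : ∀ t : ℝ, F y t = (Ioo (2*k₁*dist x y) (2*k₂*dist x y)).indicator
              (fun t => ENNReal.ofReal (ρ t / t) * w y) t := by
            intro t
            simp [hF_def, Set.indicator_apply, Set.mem_Ioo, Set.mem_setOf_eq]
          rw [lintegral_congr hFy, lintegral_indicator measurableSet_Ioo,
            lintegral_mul_const _ hrhm]
      _ = ∫⁻ t, ∫⁻ y, F y t := lintegral_lintegral_swap hFm.aemeasurable
      _ = ∫⁻ t, ENNReal.ofReal (ρ t / t) * V t := by
          apply lintegral_congr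
          intro t
          have hFt : ∀ y : Euc n, F y t =
              ({y : Euc n | 2*k₁*dist x y < t ∧ t < 2*k₂*dist x y}).indicator
              (fun y => ENNReal.ofReal (ρ t / t) * w y) y := by
            intro y
            simp [hF_def, Set.indicator_apply, Set.mem_setOf_eq]
          rw [lintegral_congr hFt, lintegral_indicator (hStm t),
            lintegral_const_mul' _ _ ENNReal.ofReal_ne_top, hV_def]
  -- V bound
  have stepV : ∀ t : ℝ, 0 < t →
      V t ≤ (ENNReal.ofReal ((t / (2 * k₂)) ^ n))⁻¹ *
        ∫⁻ y in ball x (t / (2 * k₁)), (‖f y‖₊ : ℝ≥0∞) := by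
    intro t ht
    have hsub : {y : Euc n | 2*k₁*dist x y < t ∧ t < 2*k₂*dist x y} ⊆ ball x (t/(2*k₁)) := by
      intro y hy
      rw [mem_ball, dist_comm, lt_div_iff₀ (by positivity)]
      calc dist x y * (2*k₁) = 2*k₁*dist x y := by ring
        _ < t := hy.1
    have hpt : ∀ y ∈ {y : Euc n | 2*k₁*dist x y < t ∧ t < 2*k₂*dist x y},
        w y ≤ (ENNReal.ofReal ((t/(2*k₂))^n))⁻¹ * (‖f y‖₊ : ℝ≥0∞) := by
      intro y hy
      rw [hw_def]
      apply mul_le_mul_left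
      apply ENNReal.inv_le_inv.2
      apply ENNReal.ofReal_le_ofReal
      apply pow_le_pow_left₀ (by positivity)
      rw [div_le_iff₀ (by positivity)]
      calc t ≤ 2*k₂*dist x y := hy.2.le
        _ = dist x y * (2*k₂) := by ring
    calc V t ≤ ∫⁻ y in {y : Euc n | 2*k₁*dist x y < t ∧ t < 2*k₂*dist x y},
          (ENNReal.ofReal ((t/(2*k₂))^n))⁻¹ * (‖f y‖₊ : ℝ≥0∞) := by
          rw [hV_def]
          exact setLIntegral_mono (measurable_const.mul hfm.nnnorm.coe_nnreal_ennreal) hpt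
      _ ≤ ∫⁻ y in ball x (t/(2*k₁)),
          (ENNReal.ofReal ((t/(2*k₂))^n))⁻¹ * (‖f y‖₊ : ℝ≥0∞) := lintegral_mono_set hsub
      _ = (ENNReal.ofReal ((t/(2*k₂))^n))⁻¹ * ∫⁻ y in ball x (t/(2*k₁)), (‖f y‖₊ : ℝ≥0∞) :=
          lintegral_const_mul' _ _ (ENNReal.inv_ne_top.2 (ENNReal.ofReal_pos.2 (by positivity)).ne')
  have hgeo : ∀ t : ℝ, 0 < t →
      (ENNReal.ofReal ((t / (2 * k₂)) ^ n))⁻¹ * ENNReal.ofReal ((t / (2 * k₁)) ^ n) = cK := by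
    intro t ht
    rw [hcK_def, ← ENNReal.ofReal_inv_of_pos (by positivity),
      ← ENNReal.ofReal_mul (by positivity)]
    congr 1
    rw [← inv_pow, ← mul_pow]
    congr 1
    rw [inv_div]
    field_simp
  have hvolball : ∀ t : ℝ, 0 < t →
      volume (ball x (t / (2 * k₁))) = ENNReal.ofReal ((t / (2 * k₁)) ^ n) * cn := by
    intro t ht
    haveI : Nontrivial (Euc n) := inferInstance
    rw [hcn_def, Measure.addHaar_ball volume x (by positivity), finrank_euclideanSpace_fin]
  -- the main estimate
  have est : ∀ s : ℝ≥0∞, s ≠ 0 → s ≠ ⊤ → Φ u ≤ s → I₀ ≤ Ktot * (L * yInv Ψ s) := by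
    intro s hs0 hst hus
    have hsR : 0 < s.toReal := ENNReal.toReal_pos hs0 hst
    set R : ℝ := s.toReal ^ (-(1:ℝ)/n) with hR_def
    have hR : 0 < R := Real.rpow_pos_of_pos hsR _
    have hRn : R ^ n = (s.toReal)⁻¹ := by
      rw [hR_def, ← Real.rpow_natCast (s.toReal ^ (-(1:ℝ)/n)) n, ← Real.rpow_mul hsR.le]
      rw [show (-(1:ℝ)/n) * n = -1 by field_simp]
      exact Real.rpow_neg_one _
    set T : ℝ := R/2 with hT_def
    have hT : 0 < T := by positivity
    have hrinv2T : rinv n (2*T) = s := by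
      rw [rinv, show 2*T = R by rw [hT_def]; ring, hRn, inv_inv, ENNReal.ofReal_toReal hst]
    have hrinvT : rinv n T = ENNReal.ofReal ((2:ℝ)^n) * s := by
      rw [rinv, hT_def, div_pow, hRn,
        show ((s.toReal⁻¹)/(2:ℝ)^n)⁻¹ = 2^n * s.toReal by rw [inv_div, div_inv_eq_mul],
        ENNReal.ofReal_mul (by positivity), ENNReal.ofReal_toReal hst]
    -- near part
    have hQ : (∫⁻ t in Ioo (0:ℝ) (2*T), ENNReal.ofReal (ρ t / t)) * (A * (cn * cK)) ≤
        cn * cK * ENNReal.ofReal C₀ * ENNReal.ofReal CO * (L * yInv Ψ s) := by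
      have hcoT := hco (2*T) (by positivity)
      rw [hrinv2T] at hcoT
      have h1 : yInv Φ s * (∫⁻ t in Ioo (0:ℝ) (2*T), ENNReal.ofReal (ρ t / t)) ≤
          ENNReal.ofReal CO * yInv Ψ s := le_trans le_self_add hcoT
      have huy : u ≤ yInv Φ s := le_yInv hΦ hus
      have h2 : (∫⁻ t in Ioo (0:ℝ) (2*T), ENNReal.ofReal (ρ t / t)) ≤
          (ENNReal.ofReal CO * yInv Ψ s) / u := by
        rw [ENNReal.le_div_iff_mul_le (Or.inl hu0) (Or.inl hut)]
        calc (∫⁻ t in Ioo (0:ℝ) (2*T), ENNReal.ofReal (ρ t / t)) * u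
            ≤ (∫⁻ t in Ioo (0:ℝ) (2*T), ENNReal.ofReal (ρ t / t)) * yInv Φ s :=
              mul_le_mul_right huy _
          _ = yInv Φ s * (∫⁻ t in Ioo (0:ℝ) (2*T), ENNReal.ofReal (ρ t / t)) := mul_comm _ _
          _ ≤ _ := h1
      calc (∫⁻ t in Ioo (0:ℝ) (2*T), ENNReal.ofReal (ρ t / t)) * (A * (cn * cK))
          ≤ ((ENNReal.ofReal CO * yInv Ψ s) / u) * (A * (cn * cK)) := mul_le_mul_left h2 _
        _ = (cn * cK) * ((A / u) * (ENNReal.ofReal CO * yInv Ψ s)) := by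
            rw [div_eq_mul_inv, div_eq_mul_inv]; ring
        _ = (cn * cK) * ((ENNReal.ofReal C₀ * L) * (ENNReal.ofReal CO * yInv Ψ s)) := by
            rw [hAu]
        _ = cn * cK * ENNReal.ofReal C₀ * ENNReal.ofReal CO * (L * yInv Ψ s) := by ring
    have hnear : ∫⁻ t in Ioc (0:ℝ) T, ENNReal.ofReal (ρ t / t) * V t ≤
        cn * cK * ENNReal.ofReal C₀ * ENNReal.ofReal CO * (L * yInv Ψ s) := by
      have hb : ∀ t ∈ Ioc (0:ℝ) T,
          ENNReal.ofReal (ρ t / t) * V t ≤ ENNReal.ofReal (ρ t / t) * (A * (cn * cK)) := by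
        intro t ht
        have ht0 : 0 < t := ht.1
        apply mul_le_mul_right
        calc V t ≤ (ENNReal.ofReal ((t/(2*k₂))^n))⁻¹ *
              ∫⁻ y in ball x (t/(2*k₁)), (‖f y‖₊ : ℝ≥0∞) := stepV t ht.1
          _ ≤ (ENNReal.ofReal ((t/(2*k₂))^n))⁻¹ * (A * volume (ball x (t/(2*k₁)))) :=
              mul_le_mul_right (maxOp_ball_bound f x (div_pos ht0 (by positivity))) _
          _ = (ENNReal.ofReal ((t/(2*k₂))^n))⁻¹ *
              (A * (ENNReal.ofReal ((t/(2*k₁))^n) * cn)) := by rw [hvolball t ht.1]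
          _ = ((ENNReal.ofReal ((t/(2*k₂))^n))⁻¹ * ENNReal.ofReal ((t/(2*k₁))^n)) * (A * cn) := by
              ring
          _ = cK * (A * cn) := by rw [hgeo t ht.1]
          _ = A * (cn * cK) := by ring
      calc ∫⁻ t in Ioc (0:ℝ) T, ENNReal.ofReal (ρ t / t) * V t
          ≤ ∫⁻ t in Ioc (0:ℝ) T, ENNReal.ofReal (ρ t / t) * (A * (cn * cK)) :=
            setLIntegral_mono (hrhm.mul_const _) hb
        _ = (∫⁻ t in Ioc (0:ℝ) T, ENNReal.ofReal (ρ t / t)) * (A * (cn * cK)) :=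
            lintegral_mul_const _ hrhm
        _ ≤ (∫⁻ t in Ioo (0:ℝ) (2*T), ENNReal.ofReal (ρ t / t)) * (A * (cn * cK)) := by
            apply mul_le_mul_left
            apply lintegral_mono_set
            intro t ht
            exact ⟨ht.1, lt_of_le_of_lt ht.2 (by linarith)⟩
        _ ≤ _ := hQ
    -- far part
    have hfar : ∫⁻ t in Ioi T, ENNReal.ofReal (ρ t / t) * V t ≤
        cF * ENNReal.ofReal CO * c2 * (L * yInv Ψ s) := by
      have hb : ∀ t ∈ Ioi T, ENNReal.ofReal (ρ t / t) * V t ≤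
          (cF * L) * (ENNReal.ofReal (ρ t / t) * yInv Φ (rinv n t)) := by
        intro t ht
        have ht0 : 0 < t := lt_trans hT ht
        have hvol0 : volume (ball x (t/(2*k₁))) ≠ 0 :=
          (measure_ball_pos _ _ (by positivity)).ne'
        have hvolt : volume (ball x (t/(2*k₁))) ≠ ⊤ := measure_ball_lt_top.ne
        have hball := lux_setLintegral_le hΦ (fun y => ENNReal.coe_ne_top (r := ‖f y‖₊))
          hvol0 hvolt hLt
        have hinv : (volume (ball x (t/(2*k₁))))⁻¹ =
            (cn⁻¹ * ENNReal.ofReal ((2*k₁)^n)) * rinv n t := by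
          rw [hvolball t ht0,
            ENNReal.mul_inv (Or.inl (ENNReal.ofReal_pos.2 (by positivity)).ne') (Or.inl ENNReal.ofReal_ne_top),
            ← ENNReal.ofReal_inv_of_pos (by positivity), rinv,
            show (((t/(2*k₁))^n)⁻¹ : ℝ) = (2*k₁)^n * (t^n)⁻¹ by
              rw [div_pow]; field_simp,
            ENNReal.ofReal_mul (by positivity)]
          ring
        have hyb : yInv Φ ((volume (ball x (t/(2*k₁))))⁻¹) ≤ cmax * yInv Φ (rinv n t) := by
          rw [hinv, hcmax_def]
          exact yInv_scale hΦ (ENNReal.mul_ne_top (ENNReal.inv_ne_top.2 hcn0) ENNReal.ofReal_ne_top)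
        calc ENNReal.ofReal (ρ t / t) * V t
            ≤ ENNReal.ofReal (ρ t / t) * ((ENNReal.ofReal ((t/(2*k₂))^n))⁻¹ *
              ∫⁻ y in ball x (t/(2*k₁)), (‖f y‖₊ : ℝ≥0∞)) := mul_le_mul_right (stepV t ht0) _
          _ ≤ ENNReal.ofReal (ρ t / t) * ((ENNReal.ofReal ((t/(2*k₂))^n))⁻¹ *
              (L * (4 * (cmax * yInv Φ (rinv n t) * (ENNReal.ofReal ((t/(2*k₁))^n) * cn))))) := by
              apply mul_le_mul_right
              apply mul_le_mul_right
              refine le_trans hball ?_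
              rw [hvolball t ht0] at hyb ⊢
              exact mul_le_mul_right (mul_le_mul_right (mul_le_mul_left hyb _) _) _
          _ = ((ENNReal.ofReal ((t/(2*k₂))^n))⁻¹ * ENNReal.ofReal ((t/(2*k₁))^n)) *
              (4 * cmax * cn) * L * (ENNReal.ofReal (ρ t / t) * yInv Φ (rinv n t)) := by ring
          _ = (cF * L) * (ENNReal.ofReal (ρ t / t) * yInv Φ (rinv n t)) := by
              rw [hgeo t ht0, hcF_def]; ring
      have hcFL_t : cF * L ≠ ⊤ := ENNReal.mul_ne_top hcFt hLt
      have hcoT := hco T hT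
      rw [hrinvT] at hcoT
      have h2 : (∫⁻ t in Ioi T, ENNReal.ofReal (ρ t / t) * yInv Φ (rinv n t)) ≤
          ENNReal.ofReal CO * yInv Ψ (ENNReal.ofReal ((2:ℝ)^n) * s) := le_trans le_add_self hcoT
      have h3 : yInv Ψ (ENNReal.ofReal ((2:ℝ)^n) * s) ≤ c2 * yInv Ψ s := by
        rw [hc2_def]
        exact yInv_scale hΨ ENNReal.ofReal_ne_top
      calc ∫⁻ t in Ioi T, ENNReal.ofReal (ρ t / t) * V t
          ≤ ∫⁻ t in Ioi T, (cF * L) * (ENNReal.ofReal (ρ t / t) * yInv Φ (rinv n t)) :=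
            setLIntegral_mono ((hrhm.mul hyim).const_mul _) hb
        _ = (cF * L) * ∫⁻ t in Ioi T, ENNReal.ofReal (ρ t / t) * yInv Φ (rinv n t) :=
            lintegral_const_mul' _ _ hcFL_t
        _ ≤ (cF * L) * (ENNReal.ofReal CO * (c2 * yInv Ψ s)) :=
            mul_le_mul_right (le_trans h2 (mul_le_mul_right h3 _)) _
        _ = cF * ENNReal.ofReal CO * c2 * (L * yInv Ψ s) := by ring
    -- split
    have hsplit : (∫⁻ t, ENNReal.ofReal (ρ t / t) * V t) =
        (∫⁻ t in Ioc (0:ℝ) T, ENNReal.ofReal (ρ t / t) * V t) +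
        ∫⁻ t in Ioi T, ENNReal.ofReal (ρ t / t) * V t := by
      have hzero : ∫⁻ t in Iic (0:ℝ), ENNReal.ofReal (ρ t / t) * V t = 0 := by
        have hz : ∀ t ∈ Iic (0:ℝ), ENNReal.ofReal (ρ t / t) * V t = 0 := by
          intro t ht
          have hempty : {y : Euc n | 2*k₁*dist x y < t ∧ t < 2*k₂*dist x y} = ∅ := by
            ext y
            simp only [Set.mem_setOf_eq, Set.mem_empty_iff_false, iff_false, not_and]
            intro hy
            have h1 : (0:ℝ) ≤ 2*k₁*dist x y := by positivity
            linarith [Set.mem_Iic.1 ht]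
          have : V t = 0 := by
            rw [hV_def]
            simp only [hempty, Measure.restrict_empty, lintegral_zero_measure]
          rw [this, mul_zero]
        calc ∫⁻ t in Iic (0:ℝ), ENNReal.ofReal (ρ t / t) * V t
            = ∫⁻ _ in Iic (0:ℝ), (0:ℝ≥0∞) := setLIntegral_congr_fun measurableSet_Iic
              hz
          _ = 0 := lintegral_zero
      calc (∫⁻ t, ENNReal.ofReal (ρ t / t) * V t)
          = (∫⁻ t in Iic (0:ℝ), ENNReal.ofReal (ρ t / t) * V t) +
            ∫⁻ t in (Iic (0:ℝ))ᶜ, ENNReal.ofReal (ρ t / t) * V t :=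
            (lintegral_add_compl _ measurableSet_Iic).symm
        _ = ∫⁻ t in Ioi (0:ℝ), ENNReal.ofReal (ρ t / t) * V t := by
            rw [hzero, zero_add, Set.compl_Iic]
        _ = _ := by
            rw [← Set.Ioc_union_Ioi_eq_Ioi hT.le,
              lintegral_union measurableSet_Ioi (Set.Ioc_disjoint_Ioi le_rfl)]
    calc I₀ ≤ ENNReal.ofReal CS * ∫⁻ t, ENNReal.ofReal (ρ t / t) * V t := by
          rw [← hswap]; exact step1
      _ = ENNReal.ofReal CS * ((∫⁻ t in Ioc (0:ℝ) T, ENNReal.ofReal (ρ t / t) * V t) +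
          ∫⁻ t in Ioi T, ENNReal.ofReal (ρ t / t) * V t) := by rw [hsplit]
      _ ≤ ENNReal.ofReal CS * (cn * cK * ENNReal.ofReal C₀ * ENNReal.ofReal CO * (L * yInv Ψ s) +
          cF * ENNReal.ofReal CO * c2 * (L * yInv Ψ s)) :=
          mul_le_mul_right (add_le_add hnear hfar) _
      _ = Ktot * (L * yInv Ψ s) := by rw [hK_def]; ring
  -- conclude
  rcases eq_or_ne (Φ u) ⊤ with hsu | hsu
  · rw [hsu, yInv_top, ENNReal.mul_top]
    · exact le_top
    · exact (ENNReal.mul_pos (ENNReal.ofReal_pos.2 (by positivity)).ne' hL0.ne').ne'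
  have final : I₀ ≤ Ktot * (L * yInv Ψ (Φ u)) := by
    rcases eq_or_ne (Φ u) 0 with hsu0 | hsu0
    · have hKL0 : Ktot * L ≠ 0 := (ENNReal.mul_pos hK0 hL0.ne').ne'
      have hKLt : Ktot * L ≠ ⊤ := ENNReal.mul_ne_top hKt hLt
      have hdiv : I₀ / (Ktot * L) ≤ yInv Ψ (Φ u) := by
        rw [hsu0, yInv]
        apply le_sInf
        intro v hv
        obtain ⟨s', hs1, hs2⟩ := exists_between (show (0:ℝ≥0∞) < Ψ v from hv)
        have h1 : yInv Ψ s' ≤ v := sInf_le hs2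
        have h2 : I₀ ≤ (Ktot * L) * yInv Ψ s' := by
          rw [mul_assoc]
          exact est s' hs1.ne' (ne_top_of_lt hs2) (by rw [hsu0]; exact zero_le)
        rw [ENNReal.div_le_iff_le_mul (Or.inl hKL0) (Or.inl hKLt)]
        calc I₀ ≤ (Ktot * L) * yInv Ψ s' := h2
          _ ≤ (Ktot * L) * v := mul_le_mul_right h1 _
          _ = v * (Ktot * L) := mul_comm _ _
      have h3 := (ENNReal.div_le_iff_le_mul (Or.inl hKL0) (Or.inl hKLt)).1 hdiv
      calc I₀ ≤ yInv Ψ (Φ u) * (Ktot * L) := h3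
        _ = Ktot * (L * yInv Ψ (Φ u)) := by ring
    · exact est (Φ u) hsu0 hsu le_rfl
  calc ENNReal.ofReal (Irho n ρ f x) ≤ I₀ := step0
    _ ≤ Ktot * (L * yInv Ψ (Φ u)) := final
    _ = Ktot * L * yInv Ψ (Φ u) := by ring
    _ ≤ ENNReal.ofReal (Ktot.toReal + 1) * L * yInv Ψ (Φ u) :=
        mul_le_mul_left (mul_le_mul_left hKle L) _

end
end
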